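/- Let 𝓜 be a regular collection consisting of n channel sets M₁, …, Mₙ for some n ≥ 1. If the union M₁ ∪ … ∪ Mₙ contains at least n channel pairs — that is, there exist channels ch₁, …, chₙ such that the 2n channels ch₁, d ch₁, …, chₙ, d chₙ are pairwise distinct and all belong to the union — then 𝓜 is not DF-reducible. -/

import Mathlib

set_option linter.unusedSectionVars false

namespace DFAux

variable {α : Type*} [DecidableEq α]

lemma mem_msup {s : Multiset (Finset α)} {x : α} : x ∈ s.sup ↔ ∃ M ∈ s, x ∈ M := by
  induction s using Multiset.induction_on with
  | empty => simp
  | cons a s ih => simp [Multiset.sup_cons, ih]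

lemma pairwise_cons {r : Finset α → Finset α → Prop} (hr : Symmetric r)
    {a : Finset α} {s : Multiset (Finset α)} :
    Multiset.Pairwise r (a ::ₘ s) ↔ (∀ b ∈ s, r a b) ∧ Multiset.Pairwise r s := by
  induction s using Quotient.inductionOn with
  | h l =>
    show Multiset.Pairwise r ((a :: l : List (Finset α)) : Multiset (Finset α)) ↔ _
    haveI : Std.Symm r := ⟨fun _ _ h => hr h⟩
    rw [Multiset.pairwise_coe_iff_pairwise, List.pairwise_cons,
      ← Multiset.pairwise_coe_iff_pairwise]
    simp

end DFAux



/-- `𝓜` DF-reduces to `𝓜'` via channel `ch`: there are two distinct member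
occurrences `M₁`, `M₂` in `𝓜` with `ch ∈ M₁` and `d ch ∈ M₂`, and `𝓜'` is
obtained from `𝓜` by removing `M₁` and `M₂` and adding `(M₁ ∪ M₂) \ {ch, d ch}`. -/
def DFStepVia {α : Type*} [DecidableEq α] (d : α → α)
    (𝓜 𝓜' : Multiset (Finset α)) (ch : α) : Prop :=
  ∃ M₁ M₂ : Finset α, M₁ ∈ 𝓜 ∧ M₂ ∈ 𝓜.erase M₁ ∧ ch ∈ M₁ ∧ d ch ∈ M₂ ∧
    𝓜' = ((M₁ ∪ M₂) \ {ch, d ch}) ::ₘ ((𝓜.erase M₁).erase M₂)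

theorem DFStepVia.card_lt {α : Type*} [DecidableEq α] {d : α → α}
    {𝓜 𝓜' : Multiset (Finset α)} {ch : α}
    (h : DFStepVia d 𝓜 𝓜' ch) : Multiset.card 𝓜' < Multiset.card 𝓜 := by
  obtain ⟨M₁, M₂, h₁, h₂, -, -, rfl⟩ := h
  have c₁ : Multiset.card (𝓜.erase M₁) < Multiset.card 𝓜 :=
    Multiset.card_erase_lt_of_mem h₁
  have c₂ : Multiset.card ((𝓜.erase M₁).erase M₂) < Multiset.card (𝓜.erase M₁) :=
    Multiset.card_erase_lt_of_mem h₂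
  rw [Multiset.card_cons]
  omega

/-- A collection `𝓜` of channel sets is regular if its member sets are pairwise
disjoint and, for every channel `ch`, `ch` belongs to the union of the sets in
`𝓜` iff `d ch` does. -/
def Regular {α : Type*} [DecidableEq α] (d : α → α)
    (𝓜 : Multiset (Finset α)) : Prop :=
  Multiset.Pairwise (fun M₁ M₂ => Disjoint M₁ M₂) 𝓜 ∧
    ∀ ch : α, ch ∈ 𝓜.sup ↔ d ch ∈ 𝓜.sup

/-- `𝓜` is DF-normal if it DF-reduces to no collection. -/
def DFNormal {α : Type*} [DecidableEq α] (d : α → α)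
    (𝓜 : Multiset (Finset α)) : Prop :=
  ¬ ∃ 𝓜' ch, DFStepVia d 𝓜 𝓜' ch

/-- `𝓜` is DF-reducible if either every member set of `𝓜` is empty, or `𝓜` is
not DF-normal and every `𝓜'` to which `𝓜` DF-reduces is DF-reducible. -/
def DFReducible {α : Type*} [DecidableEq α] (d : α → α)
    (𝓜 : Multiset (Finset α)) : Prop :=
  (∀ M ∈ 𝓜, M = ∅) ∨
    ((∃ 𝓜' ch, DFStepVia d 𝓜 𝓜' ch) ∧
      ∀ 𝓜' ch (h : DFStepVia d 𝓜 𝓜' ch), DFReducible d 𝓜')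
termination_by Multiset.card 𝓜
decreasing_by exact h.card_lt

/-- If a regular collection of `n ≥ 1` channel sets is such that the union of
its member sets contains at least `n` channel pairs (i.e., there are channels
`ch₁, …, chₙ` such that the `2n` channels `ch₁, d ch₁, …, chₙ, d chₙ` are
pairwise distinct and all belong to the union), then the collection is not
DF-reducible. -/
theorem not_DFReducible_of_pairs {α : Type*} [DecidableEq α] (d : α → α)
    (hinv : Function.Involutive d) (hfpf : ∀ ch : α, d ch ≠ ch)
    (𝓜 : Multiset (Finset α)) (n : ℕ) (hn : 1 ≤ n)
    (hcard : Multiset.card 𝓜 = n) (hreg : Regular d 𝓜)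
    (chs : Fin n → α)
    (hinj : Function.Injective
      (Sum.elim chs (fun i => d (chs i)) : Fin n ⊕ Fin n → α))
    (hmem : ∀ i : Fin n, chs i ∈ 𝓜.sup ∧ d (chs i) ∈ 𝓜.sup) :
    ¬ DFReducible d 𝓜 := by
  induction n generalizing 𝓜 with
  | zero => omega
  | succ m ih =>
    clear hn
    intro hred
    rw [DFReducible] at hred
    -- the all-empty case is impossible since chs 0 is in the union
    rcases hred with hemp | ⟨⟨𝓜', ch, hstep⟩, hall⟩
    · obtain ⟨M, hM, hchM⟩ := DFAux.mem_msup.1 (hmem ⟨0, Nat.succ_pos m⟩).1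
      rw [hemp M hM] at hchM
      exact absurd hchM (Finset.notMem_empty _)
    obtain ⟨M₁, M₂, h₁, h₂, hch1, hch2, rfl⟩ := hstep
    set rest := (𝓜.erase M₁).erase M₂ with hrest
    set N := (M₁ ∪ M₂) \ {ch, d ch} with hN
    have h𝓜 : 𝓜 = M₁ ::ₘ M₂ ::ₘ rest := by
      rw [hrest, Multiset.cons_erase h₂, Multiset.cons_erase h₁]
    -- m ≥ 1 since a step requires two members
    have hm : 1 ≤ m := by
      have := congrArg Multiset.card h𝓜
      rw [hcard] at this
      simp only [Multiset.card_cons] at this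
      omega
    -- disjointness facts
    have hsymm : Symmetric (fun M₁ M₂ : Finset α => Disjoint M₁ M₂) :=
      fun _ _ h => h.symm
    have hpw := hreg.1
    rw [h𝓜, DFAux.pairwise_cons hsymm, DFAux.pairwise_cons hsymm] at hpw
    obtain ⟨hd1, hd2, hpw⟩ := hpw
    have hd12 : Disjoint M₁ M₂ := hd1 M₂ (Multiset.mem_cons_self _ _)
    have hd1r : ∀ X ∈ rest, Disjoint M₁ X := fun X hX =>
      hd1 X (Multiset.mem_cons_of_mem hX)
    -- ch and d ch are not in rest's union
    have hch_rest : ch ∉ rest.sup := by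
      intro h
      obtain ⟨X, hX, hchX⟩ := DFAux.mem_msup.1 h
      exact Finset.disjoint_left.1 (hd1r X hX) hch1 hchX
    have hdch_rest : d ch ∉ rest.sup := by
      intro h
      obtain ⟨X, hX, hchX⟩ := DFAux.mem_msup.1 h
      exact Finset.disjoint_left.1 (hd2 X hX) hch2 hchX
    -- the new union is the old union minus {ch, d ch}
    have hsup : (N ::ₘ rest).sup = 𝓜.sup \ {ch, d ch} := by
      ext x
      rw [h𝓜]
      have hxr1 : x ∈ Multiset.sup rest → x ≠ ch := fun h hh => hch_rest (hh ▸ h)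
      have hxr2 : x ∈ Multiset.sup rest → x ≠ d ch := fun h hh => hdch_rest (hh ▸ h)
      simp only [Multiset.sup_cons, Finset.mem_sdiff, Finset.sup_eq_union,
        Finset.mem_union, hN, Finset.mem_sdiff, Finset.mem_insert,
        Finset.mem_singleton, not_or]
      tauto
    -- regularity of the new collection
    have hreg' : Regular d (N ::ₘ rest) := by
      constructor
      · rw [DFAux.pairwise_cons hsymm]
        refine ⟨fun X hX => ?_, hpw⟩
        have : Disjoint (M₁ ∪ M₂) X :=
          Finset.disjoint_union_left.2 ⟨hd1r X hX, hd2 X hX⟩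
        exact Finset.disjoint_of_subset_left (Finset.sdiff_subset) this
      · intro x
        rw [hsup, Finset.mem_sdiff, Finset.mem_sdiff, ← hreg.2 x]
        have e1 : d x = ch ↔ x = d ch := by
          constructor
          · intro h; rw [← h, hinv]
          · intro h; rw [h, hinv]
        have e2 : d x = d ch ↔ x = ch := ⟨fun h => hinv.injective h, fun h => by rw [h]⟩
        simp only [Finset.mem_insert, Finset.mem_singleton, not_or]
        tauto
    -- find an index to drop
    have hbad : ∃ bad : Fin (m + 1), ∀ j : Fin m,
        chs (bad.succAbove j) ≠ ch ∧ chs (bad.succAbove j) ≠ d ch := by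
      by_cases hex : ∃ i, chs i = ch ∨ chs i = d ch
      · obtain ⟨bad, hbad⟩ := hex
        refine ⟨bad, fun j => ?_⟩
        have hne : bad.succAbove j ≠ bad := Fin.succAbove_ne bad j
        have key : ∀ (a b : Fin (m+1) ⊕ Fin (m+1)),
            Sum.elim chs (fun i => d (chs i)) a = Sum.elim chs (fun i => d (chs i)) b →
            a = b := fun _ _ h => hinj h
        constructor
        · intro h
          rcases hbad with hb | hb
          · have := key (Sum.inl (bad.succAbove j)) (Sum.inl bad) (by simp [h, hb])
            simp only [Sum.inl.injEq] at this
            exact hne this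
          · have := key (Sum.inr (bad.succAbove j)) (Sum.inl bad) (by simp [h, hb])
            simp at this
        · intro h
          rcases hbad with hb | hb
          · have := key (Sum.inl (bad.succAbove j)) (Sum.inr bad) (by simp [h, hb])
            simp at this
          · have := key (Sum.inl (bad.succAbove j)) (Sum.inl bad) (by simp [h, hb])
            simp only [Sum.inl.injEq] at this
            exact hne this
      · push_neg at hex
        exact ⟨⟨0, Nat.succ_pos m⟩, fun j => hex _⟩
    obtain ⟨bad, hkeep⟩ := hbad
    have hcard' : Multiset.card (N ::ₘ rest) = m := by
      have hc := congrArg Multiset.card h𝓜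
      rw [hcard] at hc
      simp only [Multiset.card_cons] at hc ⊢
      omega
    refine ih _ hm hcard' hreg' (fun j => chs (bad.succAbove j)) ?_ ?_
      (hall _ ch ⟨M₁, M₂, h₁, h₂, hch1, hch2, rfl⟩)
    · have hcomp : (Sum.elim (fun j => chs (bad.succAbove j))
          (fun j => d (chs (bad.succAbove j))) : Fin m ⊕ Fin m → α) =
          (Sum.elim chs (fun i => d (chs i))) ∘ Sum.map bad.succAbove bad.succAbove := by
        funext x; cases x <;> rfl
      rw [hcomp]
      exact hinj.comp (Function.Injective.sumMap
        Fin.succAbove_right_injective Fin.succAbove_right_injective)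
    · intro j
      obtain ⟨hne1, hne2⟩ := hkeep j
      constructor
      · rw [hsup, Finset.mem_sdiff]
        exact ⟨(hmem (bad.succAbove j)).1, by simp [hne1, hne2]⟩
      · rw [hsup, Finset.mem_sdiff]
        refine ⟨(hmem (bad.succAbove j)).2, ?_⟩
        simp only [Finset.mem_insert, Finset.mem_singleton, not_or]
        constructor
        · intro h
          exact hne2 (by rw [← h, hinv])
        · intro h
          exact hne1 (hinv.injective h)
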